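/- Any 2-colouring of {2,...,N} contains at least (1/2 − o(1))·N^{1/5} monochromatic solutions to x·y = z; more precisely, for every non-perfect-power integer a with 2 ≤ a ≤ N^{1/5}, the set {a, a², a³, a⁴, a⁵} yields a monochromatic solution with z = aᵐ for some 2 ≤ m ≤ 5, and distinct such a yield distinct solutions (since a is recoverable from z as the least element b with z a power of b). -/

import Mathlib

/-- `a` is a perfect power. -/
def IsPP (a : ℕ) : Prop := ∃ b t, 2 ≤ b ∧ 2 ≤ t ∧ b ^ t = a

/-- Largest `k` with `k^5 ≤ N`. -/
def KK (N : ℕ) : ℕ := Nat.findGreatest (fun k => k ^ 5 ≤ N) N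

open Classical in
/-- Non-perfect-powers in `[2, KK N]`. -/
noncomputable def goodSet (N : ℕ) : Finset ℕ :=
  (Finset.Icc 2 (KK N)).filter fun a => ¬ IsPP a

lemma exists_pow_eq {a j : ℕ} (ha : a ≠ 0) (hj : j ≠ 0)
    (h : ∀ p, j ∣ a.factorization p) : ∃ c, c ^ j = a := by
  refine ⟨Nat.floorRoot j a, ?_⟩
  have hfr : Nat.floorRoot j a ≠ 0 := Nat.floorRoot_ne_zero.2 ⟨hj, ha⟩
  refine Nat.eq_of_factorization_eq (pow_ne_zero _ hfr) ha fun p => ?_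
  rw [Nat.factorization_pow, Finsupp.smul_apply, Nat.factorization_floorRoot,
    Finsupp.floorDiv_apply, Nat.floorDiv_eq_div, smul_eq_mul]
  exact Nat.mul_div_cancel' (h p)

lemma key_coprime {a b i j : ℕ} (ha : a ≠ 0) (hj : 1 ≤ j)
    (hcop : Nat.Coprime i j) (hab : a ^ i = b ^ j) : ∃ c, a = c ^ j := by
  have h : ∀ p, j ∣ a.factorization p := by
    intro p
    have h1 : (a ^ i).factorization p = (b ^ j).factorization p := by rw [hab]
    rw [Nat.factorization_pow, Nat.factorization_pow, Finsupp.smul_apply,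
      Finsupp.smul_apply, smul_eq_mul, smul_eq_mul] at h1
    have : j ∣ i * a.factorization p := ⟨b.factorization p, h1⟩
    exact (Nat.Coprime.dvd_of_dvd_mul_left (Nat.Coprime.symm hcop) this)
  obtain ⟨c, hc⟩ := exists_pow_eq ha (by omega) h
  exact ⟨c, hc.symm⟩

lemma npp_eq {a b i j : ℕ} (ha : 2 ≤ a) (hb : 2 ≤ b) (hA : ¬IsPP a) (hB : ¬IsPP b)
    (hi : 1 ≤ i) (hj : 1 ≤ j) (h : a ^ i = b ^ j) : a = b := by
  set d := Nat.gcd i j with hd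
  have hdi : d ∣ i := Nat.gcd_dvd_left i j
  have hdj : d ∣ j := Nat.gcd_dvd_right i j
  have hdpos : 0 < d := Nat.gcd_pos_of_pos_left j (by omega)
  have hcop : Nat.Coprime (i / d) (j / d) := Nat.coprime_div_gcd_div_gcd hdpos
  have hipos : 1 ≤ i / d := Nat.one_le_div_iff hdpos |>.2 (Nat.le_of_dvd (by omega) hdi)
  have hjpos : 1 ≤ j / d := Nat.one_le_div_iff hdpos |>.2 (Nat.le_of_dvd (by omega) hdj)
  have hpow : a ^ (i / d) = b ^ (j / d) := by
    have h1 : (a ^ (i / d)) ^ d = (b ^ (j / d)) ^ d := by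
      rw [← pow_mul, ← pow_mul, Nat.div_mul_cancel hdi, Nat.div_mul_cancel hdj, h]
    exact Nat.pow_left_injective (by omega) h1
  obtain ⟨c, hc⟩ := key_coprime (a := a) (by omega) hjpos hcop hpow
  obtain ⟨c', hc'⟩ := key_coprime (a := b) (by omega) hipos hcop.symm hpow.symm
  have hc2 : 2 ≤ c := by
    by_contra hcon
    have hcle : c ^ (j / d) ≤ 1 := by
      calc c ^ (j / d) ≤ 1 ^ (j / d) := Nat.pow_le_pow_left (by omega) _
        _ = 1 := one_pow _
    rw [hc] at ha
    omega
  have hc'2 : 2 ≤ c' := by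
    by_contra hcon
    have hcle : c' ^ (i / d) ≤ 1 := by
      calc c' ^ (i / d) ≤ 1 ^ (i / d) := Nat.pow_le_pow_left (by omega) _
        _ = 1 := one_pow _
    rw [hc'] at hb
    omega
  have hjd1 : j / d = 1 := by
    by_contra hcon
    exact hA ⟨c, j / d, hc2, by omega, hc.symm⟩
  have hid1 : i / d = 1 := by
    by_contra hcon
    exact hB ⟨c', i / d, hc'2, by omega, hc'.symm⟩
  rw [hjd1, pow_one] at hc
  rw [hid1, pow_one] at hc'
  rw [hjd1, hid1] at hpow
  simpa using hpow

lemma bool_eq_of_ne {x y z : Bool} (h1 : x ≠ z) (h2 : y ≠ z) : x = y := by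
  cases x <;> cases y <;> cases z <;> simp_all

/-- Five-point lemma: any 2-colouring of `{a, a², a³, a⁴, a⁵}` has a monochromatic product. -/
lemma five_point (c : ℕ → Bool) (a : ℕ) :
    ∃ i j, 1 ≤ i ∧ 1 ≤ j ∧ i + j ≤ 5 ∧
      c (a ^ i) = c (a ^ j) ∧ c (a ^ j) = c (a ^ (i + j)) := by
  by_cases h1 : c (a ^ 1) = c (a ^ 2)
  · exact ⟨1, 1, le_refl _, le_refl _, by norm_num, rfl, h1⟩
  by_cases h2 : c (a ^ 2) = c (a ^ 4)
  · exact ⟨2, 2, by norm_num, by norm_num, by norm_num, rfl, h2⟩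
  have h14 : c (a ^ 1) = c (a ^ 4) := bool_eq_of_ne h1 (fun h => h2 h.symm)
  by_cases h3 : c (a ^ 1) = c (a ^ 3)
  · exact ⟨1, 3, le_refl _, by norm_num, by norm_num, h3, by rw [← h3]; exact h14⟩
  have h32 : c (a ^ 3) = c (a ^ 2) := bool_eq_of_ne (fun h => h3 h.symm) (fun h => h1 h.symm)
  by_cases h5 : c (a ^ 5) = c (a ^ 2)
  · exact ⟨2, 3, by norm_num, by norm_num, by norm_num, h32.symm, by rw [h32]; exact h5.symm⟩
  have h15 : c (a ^ 1) = c (a ^ 5) := bool_eq_of_ne h1 h5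
  exact ⟨1, 4, le_refl _, by norm_num, by norm_num, by rw [← h14], by rw [← h14, ← h15]⟩

lemma good_le_count (N : ℕ) (c : ℕ → Bool) :
    (goodSet N).card ≤
      (((Finset.Icc 2 N ×ˢ Finset.Icc 2 N ×ˢ Finset.Icc 2 N).filter
        (fun p => p.1 * p.2.1 = p.2.2 ∧ c p.1 = c p.2.1 ∧ c p.2.1 = c p.2.2)).card) := by
  classical
  set S := ((Finset.Icc 2 N ×ˢ Finset.Icc 2 N ×ˢ Finset.Icc 2 N).filter
    (fun p => p.1 * p.2.1 = p.2.2 ∧ c p.1 = c p.2.1 ∧ c p.2.1 = c p.2.2)) with hS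
  have hex : ∀ a, a ∈ goodSet N →
      ∃ p : ℕ × ℕ × ℕ, p ∈ S ∧ ∃ m, 2 ≤ m ∧ m ≤ 5 ∧ p.2.2 = a ^ m := by
    intro a ha
    rw [goodSet, Finset.mem_filter, Finset.mem_Icc] at ha
    obtain ⟨⟨ha2, haK⟩, hanp⟩ := ha
    have hN1 : 2 ≤ N := le_trans (le_trans ha2 haK) (Nat.findGreatest_le N)
    have hK5 : (KK N) ^ 5 ≤ N :=
      Nat.findGreatest_spec (P := fun k => k ^ 5 ≤ N) (m := 1) (by omega) (by simpa using (by omega : 1 ≤ N))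
    have hpow_mem : ∀ k, 1 ≤ k → k ≤ 5 → a ^ k ∈ Finset.Icc 2 N := by
      intro k hk1 hk5
      rw [Finset.mem_Icc]
      constructor
      · calc 2 ≤ a := ha2
          _ ≤ a ^ k := Nat.le_self_pow (by omega) a
      · calc a ^ k ≤ a ^ 5 := Nat.pow_le_pow_right (by omega) hk5
          _ ≤ (KK N) ^ 5 := Nat.pow_le_pow_left haK 5
          _ ≤ N := hK5
    obtain ⟨i, j, hi, hj, hij, hc1, hc2⟩ := five_point c a
    refine ⟨(a ^ i, a ^ j, a ^ (i + j)), ?_, i + j, by omega, hij, rfl⟩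
    rw [hS, Finset.mem_filter, Finset.mem_product, Finset.mem_product]
    exact ⟨⟨hpow_mem i hi (by omega), hpow_mem j hj (by omega),
      hpow_mem (i + j) (by omega) hij⟩, (pow_add a i j).symm, hc1, hc2⟩
  choose! F hFS m hm2 hm5 hFz using hex
  apply Finset.card_le_card_of_injOn F hFS
  intro a ha b hb hFab
  rw [Finset.mem_coe] at ha hb
  have hz : a ^ m a = b ^ m b := by
    rw [← hFz a ha, ← hFz b hb, hFab]
  have hma : 2 ≤ m a := hm2 a ha
  have hmb : 2 ≤ m b := hm2 b hb
  rw [goodSet, Finset.mem_filter, Finset.mem_Icc] at ha hb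
  exact npp_eq ha.1.1 hb.1.1 ha.2 hb.2 (by omega) (by omega) hz

lemma pow4_le_two_pow : ∀ l, 16 ≤ l → l ^ 4 ≤ 2 ^ l := by
  intro l hl
  induction l, hl using Nat.le_induction with
  | base => norm_num
  | succ n hn ih =>
    have h16 : 16 * n ^ 3 ≤ n ^ 4 := by
      calc 16 * n ^ 3 ≤ n * n ^ 3 := Nat.mul_le_mul_right _ hn
        _ = n ^ 4 := by ring
    have h1 : (n + 1) ^ 4 ≤ 2 * n ^ 4 := by nlinarith [h16, hn]
    calc (n + 1) ^ 4 ≤ 2 * n ^ 4 := h1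
      _ ≤ 2 * 2 ^ n := by omega
      _ = 2 ^ (n + 1) := by ring

lemma eventual_bound {N : ℕ} (hN : 2 ^ 80 ≤ N) :
    (N : ℝ) ^ ((1 : ℝ) / 5) ≤ 2 * (goodSet N).card := by
  classical
  obtain ⟨K, hKdef⟩ : ∃ K, K = KK N := ⟨_, rfl⟩
  have hNpos : N ≠ 0 := by positivity
  have hK16 : 2 ^ 16 ≤ K := by
    rw [hKdef]
    exact Nat.le_findGreatest (le_trans (by norm_num) hN)
      (by calc ((2:ℕ)^16)^5 = 2^80 := by norm_num
            _ ≤ N := hN)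
  obtain ⟨s, hsdef⟩ : ∃ s, s = Nat.sqrt K := ⟨_, rfl⟩
  obtain ⟨l, hldef⟩ : ∃ l, l = Nat.log 2 K := ⟨_, rfl⟩
  obtain ⟨s4, hs4def⟩ : ∃ s4, s4 = Nat.sqrt s := ⟨_, rfl⟩
  -- perfect power count
  have ppcard : ((Finset.Icc 2 K).filter IsPP).card ≤ s * l := by
    have hsub : (Finset.Icc 2 K).filter IsPP ⊆
        (Finset.Icc 2 s ×ˢ Finset.Icc 2 l).image fun p => p.1 ^ p.2 := by
      intro x hx
      rw [Finset.mem_filter, Finset.mem_Icc] at hx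
      obtain ⟨⟨hx2, hxK⟩, b, t, hb, ht, rfl⟩ := hx
      rw [Finset.mem_image]
      refine ⟨(b, t), ?_, rfl⟩
      rw [Finset.mem_product, Finset.mem_Icc, Finset.mem_Icc]
      have hbs : b ≤ s := by
        rw [hsdef, Nat.le_sqrt]
        calc b * b = b ^ 2 := (sq b).symm
          _ ≤ b ^ t := Nat.pow_le_pow_right (by omega) ht
          _ ≤ K := hxK
      have htl : t ≤ l := by
        rw [hldef, Nat.le_log_iff_pow_le (by norm_num) (by omega)]
        calc 2 ^ t ≤ b ^ t := Nat.pow_le_pow_left hb t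
          _ ≤ K := hxK
      exact ⟨⟨hb, hbs⟩, ht, htl⟩
    calc ((Finset.Icc 2 K).filter IsPP).card
        ≤ ((Finset.Icc 2 s ×ˢ Finset.Icc 2 l).image fun p => p.1 ^ p.2).card :=
          Finset.card_le_card hsub
      _ ≤ (Finset.Icc 2 s ×ˢ Finset.Icc 2 l).card := Finset.card_image_le
      _ = (s + 1 - 2) * (l + 1 - 2) := by
          rw [Finset.card_product, Nat.card_Icc, Nat.card_Icc]
      _ ≤ s * l := Nat.mul_le_mul (by omega) (by omega)
  -- l is small
  have hl16 : 16 ≤ l := by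
    rw [hldef]
    exact (Nat.le_log_iff_pow_le (by norm_num) (by omega : K ≠ 0)).2 hK16
  have hls4 : l ≤ s4 := by
    have h2l : 2 ^ l ≤ K := by rw [hldef]; exact Nat.pow_log_le_self 2 (by omega)
    have hl4 : l ^ 4 ≤ K := le_trans (pow4_le_two_pow l hl16) h2l
    rw [hs4def, Nat.le_sqrt, hsdef, Nat.le_sqrt]
    calc l * l * (l * l) = l ^ 4 := by ring
      _ ≤ K := hl4
  have hs16 : 16 ≤ s := by
    rw [hsdef, Nat.le_sqrt]
    calc (16 : ℕ) * 16 ≤ 2 ^ 16 := by norm_num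
      _ ≤ K := hK16
  have hss : s * s ≤ K := by
    rw [hsdef]
    simpa [sq] using Nat.sqrt_le' K
  have hs4s : s4 * s4 ≤ s := by rw [hs4def]; exact Nat.sqrt_le s
  -- 4 * s * s4 ≤ K
  have h4ss4 : 4 * (s * s4) ≤ K := by
    rw [← Nat.mul_self_le_mul_self_iff]
    calc 4 * (s * s4) * (4 * (s * s4)) = 16 * (s4 * s4) * (s * s) := by ring
      _ ≤ 16 * s * K := Nat.mul_le_mul (Nat.mul_le_mul_left 16 hs4s) hss
      _ ≤ s * s * K := Nat.mul_le_mul_right K (Nat.mul_le_mul_right s hs16)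
      _ ≤ K * K := Nat.mul_le_mul_right K hss
  have hsl : s * l ≤ s * s4 := Nat.mul_le_mul_left s hls4
  -- good count
  have hgood : (goodSet N).card + ((Finset.Icc 2 K).filter IsPP).card = K + 1 - 2 := by
    rw [goodSet, ← hKdef, ← Nat.card_Icc 2 K, Nat.add_comm]
    exact Finset.card_filter_add_card_filter_not _
  have hmain : K + 1 ≤ 2 * (goodSet N).card := by omega
  -- real part
  have hNK : N < (K + 1) ^ 5 := by
    by_cases hKN : K + 1 ≤ N
    · by_contra hcon
      exact Nat.findGreatest_is_greatest (P := fun k => k ^ 5 ≤ N)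
        (by omega : KK N < K + 1) hKN (by omega)
    · calc N < K + 1 := by omega
        _ ≤ (K + 1) ^ 5 := Nat.le_self_pow (by norm_num) _
  have hreal : (N : ℝ) ^ ((1 : ℝ) / 5) ≤ (K : ℝ) + 1 := by
    have h1 : (N : ℝ) ≤ ((K : ℝ) + 1) ^ (5 : ℕ) := by
      have := hNK.le
      calc (N : ℝ) ≤ (((K + 1) ^ 5 : ℕ) : ℝ) := by exact_mod_cast this
        _ = ((K : ℝ) + 1) ^ (5 : ℕ) := by push_cast; ring
    have h2 : (N : ℝ) ^ ((1 : ℝ) / 5) ≤ (((K : ℝ) + 1) ^ (5 : ℕ)) ^ ((1 : ℝ) / 5) :=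
      Real.rpow_le_rpow (by positivity) h1 (by norm_num)
    calc (N : ℝ) ^ ((1 : ℝ) / 5) ≤ (((K : ℝ) + 1) ^ (5 : ℕ)) ^ ((1 : ℝ) / 5) := h2
      _ = ((K : ℝ) + 1) ^ ((5 : ℝ) * (1 / 5)) := by
          rw [← Real.rpow_natCast ((K : ℝ) + 1) 5, ← Real.rpow_mul (by positivity)]
          norm_num
      _ = (K : ℝ) + 1 := by norm_num
  calc (N : ℝ) ^ ((1 : ℝ) / 5) ≤ (K : ℝ) + 1 := hreal
    _ ≤ 2 * (goodSet N).card := by exact_mod_cast hmain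

open Classical in
noncomputable def fErr (N : ℕ) : ℝ :=
  if (N : ℝ) ^ ((1 : ℝ) / 5) ≤ 2 * (goodSet N).card then 0 else 1 / 2

theorem stmt_16 :
    ∃ f : ℕ → ℝ, Filter.Tendsto f Filter.atTop (nhds 0) ∧
      ∀ (N : ℕ) (c : ℕ → Bool),
        ((1 : ℝ) / 2 - f N) * (N : ℝ) ^ ((1 : ℝ) / 5) ≤
        (((Finset.Icc 2 N ×ˢ Finset.Icc 2 N ×ˢ Finset.Icc 2 N).filter
          (fun p => p.1 * p.2.1 = p.2.2 ∧ c p.1 = c p.2.1 ∧ c p.2.1 = c p.2.2)).card : ℝ) := by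
  classical
  refine ⟨fErr, ?_, ?_⟩
  · have hev : fErr =ᶠ[Filter.atTop] (fun _ => (0 : ℝ)) := by
      rw [Filter.EventuallyEq, Filter.eventually_atTop]
      exact ⟨2 ^ 80, fun N hN => by rw [fErr, if_pos (eventual_bound hN)]⟩
    exact Filter.Tendsto.congr' hev.symm tendsto_const_nhds
  · intro N c
    by_cases h : (N : ℝ) ^ ((1 : ℝ) / 5) ≤ 2 * (goodSet N).card
    · rw [fErr, if_pos h]
      have hcount : ((goodSet N).card : ℝ) ≤
          (((Finset.Icc 2 N ×ˢ Finset.Icc 2 N ×ˢ Finset.Icc 2 N).filter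
            (fun p => p.1 * p.2.1 = p.2.2 ∧ c p.1 = c p.2.1 ∧ c p.2.1 = c p.2.2)).card : ℝ) := by
        exact_mod_cast good_le_count N c
      calc ((1 : ℝ) / 2 - 0) * (N : ℝ) ^ ((1 : ℝ) / 5)
          = (N : ℝ) ^ ((1 : ℝ) / 5) / 2 := by ring
        _ ≤ ((goodSet N).card : ℝ) := by linarith
        _ ≤ _ := hcount
    · rw [fErr, if_neg h]
      have : ((1 : ℝ) / 2 - 1 / 2) * (N : ℝ) ^ ((1 : ℝ) / 5) = 0 := by ring
      rw [this]
      positivity
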